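/- Let P and Q be perfect-tree forcing notions with P ⊑ Q (Q is a refinement of P). Then for any S ∈ P and T ∈ Q, the set [S] ∩ [T] is meager in [S]; consequently P ∩ Q = ∅, and Q is open dense in P ∪ Q, i.e. every T ∈ P ∪ Q has a subtree in Q, and whenever T ∈ Q, R ∈ P ∪ Q and R ⊆ T, then R ∈ Q. -/
import Mathlib


noncomputable section

/-- Finite binary strings. -/
abbrev Str : Type := List Bool

/-- Points of Cantor space `2^ω`. -/
abbrev Pt : Type := ℕ → Bool

/-- The length-`n` initial segment of a point of Cantor space, as a string. -/
def seg (a : Pt) (n : ℕ) : Str := (List.range n).map a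

/-- A tree: a set of strings closed under initial segments. -/
def IsTree (T : Set Str) : Prop := ∀ ⦃s t : Str⦄, s <+: t → t ∈ T → s ∈ T

/-- A perfect tree: a nonempty tree in which every string has two
incomparable extensions inside the tree. -/
def IsPerfectTree (T : Set Str) : Prop :=
  T.Nonempty ∧ IsTree T ∧
    ∀ s ∈ T, ∃ t₁ t₂, t₁ ∈ T ∧ t₂ ∈ T ∧ s <+: t₁ ∧ s <+: t₂ ∧ ¬ t₁ <+: t₂ ∧ ¬ t₂ <+: t₁

/-- The restriction `T↾s = {t ∈ T : s ⊆ t or t ⊆ s}`. -/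
def Tres (T : Set Str) (s : Str) : Set Str := {t ∈ T | s <+: t ∨ t <+: s}

/-- The set `[T]` of branches of a tree `T`. -/
def branches (T : Set Str) : Set Pt := {a | ∀ n, seg a n ∈ T}

/-- `s` is the stem (root) of `T`: the longest `s ∈ T` with `T = T↾s`. -/
def IsStem (T : Set Str) (s : Str) : Prop :=
  s ∈ T ∧ T = Tres T s ∧ ∀ t ∈ T, T = Tres T t → t <+: s

open Classical in
/-- The stem `root(T)` of a tree (junk value `[]` if there is none). -/
def stem (T : Set Str) : Str := if h : ∃ s, IsStem T s then h.choose else []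

/-- Simple splitting `T→i = T↾(root(T)⌢i)`. -/
def splitOne (T : Set Str) (i : Bool) : Set Str := Tres T (stem T ++ [i])

/-- Iterated splitting `T→u`. -/
def splitIter (T : Set Str) (u : Str) : Set Str := u.foldl splitOne T

/-- Almost disjointness of trees: finite intersection. -/
def AD (S T : Set Str) : Prop := (S ∩ T).Finite

/-- A perfect-tree forcing notion: a nonempty set of perfect trees closed
under restrictions. -/
def IsPTF (P : Set (Set Str)) : Prop :=
  P.Nonempty ∧ (∀ T ∈ P, IsPerfectTree T) ∧ ∀ T ∈ P, ∀ s ∈ T, Tres T s ∈ P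

/-- `A` is relatively clopen in `B` (as a subspace of Cantor space). -/
def ClopenIn (A B : Set Pt) : Prop := IsClopen ((fun x : B => (x : Pt)) ⁻¹' A)

/-- `A` is relatively open in `B` (as a subspace of Cantor space). -/
def OpenIn (A B : Set Pt) : Prop := IsOpen ((fun x : B => (x : Pt)) ⁻¹' A)

/-- A special perfect-tree forcing notion: `P = {T↾s : s ∈ T ∈ A}` for an
antichain (pairwise a.d. set) `A ⊆ P`. -/
def SpecialPTF (P : Set (Set Str)) : Prop :=
  ∃ A ⊆ P, A.Pairwise AD ∧ P = {R | ∃ T ∈ A, ∃ s ∈ T, R = Tres T s}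

/-- A regular perfect-tree forcing notion: `[S] ∩ [T]` is relatively clopen
in `[S]` or in `[T]`, for all `S, T ∈ P`. -/
def RegularPTF (P : Set (Set Str)) : Prop :=
  ∀ S ∈ P, ∀ T ∈ P,
    ClopenIn (branches S ∩ branches T) (branches S) ∨
    ClopenIn (branches S ∩ branches T) (branches T)

/-- `T ⊆ᶠ ⋃ D`: `[T]` is covered by finitely many `[S]`, `S ∈ D`. -/
def SqFin (T : Set Str) (D : Set (Set Str)) : Prop :=
  ∃ D' ⊆ D, D'.Finite ∧ branches T ⊆ ⋃ S ∈ D', branches S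

/-- `P ⊑ Q`: `Q` is a refinement of `P`. -/
def Refines (P Q : Set (Set Str)) : Prop :=
  (∀ T ∈ P, ∃ S ∈ Q, S ⊆ T) ∧
  (∀ S ∈ Q, SqFin S P) ∧
  (∀ S ∈ Q, ∀ T ∈ P, ClopenIn (branches S ∩ branches T) (branches S) ∧ ¬ T ⊆ S)

/-- `D` is dense in `P`. -/
def DenseIn (D P : Set (Set Str)) : Prop := ∀ T ∈ P, ∃ S ∈ D, S ⊆ T

/-- `D` is pre-dense in `P`. -/
def PreDenseIn (D P : Set (Set Str)) : Prop :=
  DenseIn {T ∈ P | ∃ S ∈ D, T ⊆ S} P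

/-- `P ⊑_D Q`: `Q` locks `D` over `P`. -/
def Locks (P D Q : Set (Set Str)) : Prop :=
  Refines P Q ∧ ∀ S ∈ Q, SqFin S D

/-- A finite splitting system of height `n` over `P`. -/
def IsFSS (P : Set (Set Str)) (n : ℕ) (φ : Str → Set Str) : Prop :=
  (∀ s : Str, s.length ≤ n → φ s ∈ P) ∧
  ∀ (s : Str) (i : Bool), s.length < n → φ (s ++ [i]) ⊆ splitOne (φ s) i

lemma seg_length (a : Pt) (n : ℕ) : (seg a n).length = n := by
  simp [seg]

lemma seg_getElem (a : Pt) (n i : ℕ) (hi : i < n) :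
    (seg a n)[i]'(by simp [seg_length, hi]) = a i := by
  simp [seg]

lemma seg_eq_iff {a b : Pt} {n : ℕ} : seg a n = seg b n ↔ ∀ i < n, a i = b i := by
  constructor
  · intro h i hi
    have := congrArg (fun l => l.getD i false) h
    simpa [List.getD_eq_getElem, seg_length, hi, seg_getElem] using this
  · intro h
    apply List.ext_getElem (by simp [seg_length])
    intro i h1 h2
    rw [seg_getElem _ _ _ (by simpa [seg_length] using h1),
      seg_getElem _ _ _ (by simpa [seg_length] using h2)]
    exact h i (by simpa [seg_length] using h1)

lemma isOpen_cyl (a : Pt) (n : ℕ) : IsOpen {b : Pt | seg b n = seg a n} := by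
  have : {b : Pt | seg b n = seg a n} = ⋂ i ∈ Finset.range n, {b : Pt | b i = a i} := by
    ext b
    simp only [Set.mem_setOf_eq, Set.mem_iInter, Finset.mem_range, seg_eq_iff]
  rw [this]
  refine isOpen_biInter_finset fun i _ => ?_
  have : {b : Pt | b i = a i} = (fun b : Pt => b i) ⁻¹' {a i} := rfl
  rw [this]
  exact (continuous_apply i).isOpen_preimage _ (isOpen_discrete _)

lemma isClosed_branches (T : Set Str) : IsClosed (branches T) := by
  rw [← isOpen_compl_iff, isOpen_iff_forall_mem_open]
  intro a ha
  simp only [Set.mem_compl_iff, branches, Set.mem_setOf_eq, not_forall] at ha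
  obtain ⟨n, hn⟩ := ha
  refine ⟨{b : Pt | seg b n = seg a n}, ?_, isOpen_cyl a n, rfl⟩
  intro b hb hbT
  exact hn (hb ▸ hbT n)

lemma exists_branch_through {T : Set Str} (hT : IsPerfectTree T) {t : Str} (ht : t ∈ T) :
    ∃ a ∈ branches T, seg a t.length = t := by
  obtain ⟨hne, htree, hsplit⟩ := hT
  have step : ∀ u : {u : Str // u ∈ T}, ∃ v : {u : Str // u ∈ T},
      u.1 <+: v.1 ∧ u.1.length < v.1.length := by
    rintro ⟨u, hu⟩
    obtain ⟨t₁, t₂, h1, h2, p1, p2, n12, n21⟩ := hsplit u hu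
    by_cases he : u = t₁
    · refine ⟨⟨t₂, h2⟩, p2, lt_of_le_of_ne p2.length_le fun hl => ?_⟩
      have : u = t₂ := p2.eq_of_length hl
      exact n12 (he ▸ this ▸ List.prefix_rfl)
    · exact ⟨⟨t₁, h1⟩, p1, lt_of_le_of_ne p1.length_le fun hl => he (p1.eq_of_length hl)⟩
  choose g hg1 hg2 using step
  set f : ℕ → {u : Str // u ∈ T} := fun n => g^[n] ⟨t, ht⟩ with hf
  have hfs : ∀ n, f (n + 1) = g (f n) := fun n => Function.iterate_succ_apply' g n _
  have hpre : ∀ n m, n ≤ m → (f n).1 <+: (f m).1 := by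
    intro n m hnm
    induction hnm with
    | refl => exact List.prefix_rfl
    | step h ih => exact ih.trans (by rw [hfs]; exact hg1 _)
  have hlen : ∀ n, n ≤ (f n).1.length := by
    intro n
    induction n with
    | zero => exact Nat.zero_le _
    | succ n ih => have := hg2 (f n); rw [← hfs n] at this; omega
  set a : Pt := fun n => ((f (n + 1)).1).getD n false with haa
  have ha_seg : ∀ k, seg a k = (f k).1.take k := by
    intro k
    apply List.ext_getElem
    · simp only [seg_length, List.length_take]
      exact (Nat.min_eq_left (hlen k)).symm
    · intro i h1 h2
      have hik : i < k := by simpa [seg_length] using h1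
      have hi' : i < (f (i + 1)).1.length := lt_of_lt_of_le (Nat.lt_succ_self i) (hlen (i + 1))
      have hp : (f (i + 1)).1 <+: (f k).1 := hpre _ _ hik
      rw [seg_getElem _ _ _ hik, List.getElem_take]
      show ((f (i + 1)).1).getD i false = _
      rw [List.getD_eq_getElem _ _ hi']
      exact hp.getElem hi'
  refine ⟨a, fun n => ?_, ?_⟩
  · rw [ha_seg n]
    exact htree (List.take_prefix n _) (f n).2
  · rw [ha_seg t.length]
    have : t <+: (f t.length).1 := by
      have := hpre 0 t.length (Nat.zero_le _)
      simpa [hf] using this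
    exact (List.prefix_iff_eq_take.mp this).symm

lemma nwd_isMeagre {X : Type*} [TopologicalSpace X] {s : Set X}
    (h : IsNowhereDense s) : IsMeagre s :=
  isMeagre_iff_countable_union_isNowhereDense.mpr
    ⟨{s}, by simpa, Set.countable_singleton s, by simp⟩

lemma subset_of_branches_subset {R T : Set Str} (hR : IsPerfectTree R)
    (h : branches R ⊆ branches T) : R ⊆ T := by
  intro t ht
  obtain ⟨a, haR, hseg⟩ := exists_branch_through hR ht
  have := h haR t.length
  rwa [hseg] at this

lemma seg_of_mem_branches_Tres {S : Set Str} {s : Str} {a : Pt}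
    (ha : a ∈ branches (Tres S s)) : seg a s.length = s := by
  obtain ⟨-, hc⟩ := ha s.length
  rcases hc with hc | hc
  · exact (hc.eq_of_length (seg_length a s.length).symm).symm
  · exact hc.eq_of_length (seg_length a s.length)

/-- Lemma 3.2 (pqr) (1): if `P ⊑ Q` then `[S] ∩ [T]` is meager in `[S]` for
`S ∈ P`, `T ∈ Q`; hence `P ∩ Q = ∅` and `Q` is open dense in `P ∪ Q`. -/
theorem stmt12 (P Q : Set (Set Str)) (hP : IsPTF P) (hQ : IsPTF Q)
    (h : Refines P Q) :
    (∀ S ∈ P, ∀ T ∈ Q,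
      IsMeagre ((fun x : branches S => (x : Pt)) ⁻¹' (branches S ∩ branches T))) ∧
    P ∩ Q = ∅ ∧
    (∀ T ∈ P ∪ Q, ∃ R ∈ Q, R ⊆ T) ∧
    (∀ T ∈ Q, ∀ R ∈ P ∪ Q, R ⊆ T → R ∈ Q) := by
  refine ⟨?_, ?_, ?_, ?_⟩
  · intro S hS T hT
    set A : Set (branches S) := (fun x : branches S => (x : Pt)) ⁻¹' (branches S ∩ branches T)
      with hA
    have hA' : A = (fun x : branches S => (x : Pt)) ⁻¹' branches T := by
      ext x
      simp only [hA, Set.mem_preimage, Set.mem_inter_iff, and_iff_right_iff_imp]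
      exact fun _ => x.2
    have hAc : IsClosed A := by
      rw [hA']
      exact (isClosed_branches T).preimage continuous_subtype_val
    by_contra hm
    have hint : (interior A).Nonempty := by
      rcases Set.eq_empty_or_nonempty (interior A) with he | hn
      · exact absurd (nwd_isMeagre (hAc.isNowhereDense_iff.mpr he)) hm
      · exact hn
    obtain ⟨x, hx⟩ := hint
    obtain ⟨U, hUA, hUo, hxU⟩ := mem_interior.mp hx
    obtain ⟨V, hVo, hVU⟩ := isOpen_induced_iff.mp hUo
    have hxV : (x : Pt) ∈ V := by rw [← hVU] at hxU; exact hxU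
    obtain ⟨I, u, hIu, hpi⟩ := isOpen_pi_iff.mp hVo _ hxV
    set n : ℕ := I.sup id + 1 with hn
    set s : Str := seg (x : Pt) n with hs
    have hsl : s.length = n := seg_length _ _
    have hsS : s ∈ S := x.2 n
    have hcyl : ∀ b : Pt, seg b n = s → b ∈ V := by
      intro b hb
      apply hpi
      intro i hi
      have hin : i < n := Nat.lt_succ_of_le (Finset.le_sup (f := id) hi)
      have : b i = (x : Pt) i := seg_eq_iff.mp hb i hin
      rw [this]
      exact (hIu i hi).2
    have hbr : branches (Tres S s) ⊆ branches S ∩ branches T := by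
      intro a ha
      have haS : a ∈ branches S := fun m => (ha m).1
      have hseg : seg a n = s := by
        have := seg_of_mem_branches_Tres ha
        rwa [hsl] at this
      have haV : a ∈ V := hcyl a hseg
      have : (⟨a, haS⟩ : branches S) ∈ A := hUA (by rw [← hVU]; exact haV)
      exact this
    have hTresP : Tres S s ∈ P := hP.2.2 S hS s hsS
    have hperf : IsPerfectTree (Tres S s) := hP.2.1 _ hTresP
    have hsub : Tres S s ⊆ T :=
      subset_of_branches_subset hperf (fun a ha => (hbr ha).2)
    exact (h.2.2 T hT (Tres S s) hTresP).2 hsub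
  · ext T
    simp only [Set.mem_inter_iff, Set.mem_empty_iff_false, iff_false, not_and]
    intro hTP hTQ
    exact (h.2.2 T hTQ T hTP).2 (subset_refl T)
  · intro T hT
    rcases hT with hT | hT
    · exact h.1 T hT
    · exact ⟨T, hT, subset_refl T⟩
  · intro T hT R hR hRT
    rcases hR with hR | hR
    · exact absurd hRT (h.2.2 T hT R hR).2
    · exact hR


end
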